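/- arXiv:1111.2417 — 2 statements merged into one kernel-verified Lean document; each statement's English description precedes it below -/
import Mathlib

section
/- The groups Λ_{k,i}, for k a positive integer and i ∈ {0, π, π/2}, are pairwise non-isomorphic: if (k,i) ≠ (p,j) then there is no group isomorphism between Λ_{k,i} and Λ_{p,j}. -/
open Real

/-- The real 3-dimensional Heisenberg group, as `ℝ³` with the multiplication
`(x,y,z)·(x',y',z') = (x+x', y+y', z+z'+ (xy'-x'y)/2)`. -/
@[ext] structure Heis : Type where
  x : ℝ
  y : ℝ
  z : ℝ

namespace Heis

noncomputable instance : Mul Heis :=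
  ⟨fun a b => ⟨a.x + b.x, a.y + b.y, a.z + b.z + (a.x * b.y - b.x * a.y) / 2⟩⟩

instance : One Heis := ⟨⟨0, 0, 0⟩⟩

instance : Inv Heis := ⟨fun a => ⟨-a.x, -a.y, -a.z⟩⟩

@[simp] lemma mul_x (a b : Heis) : (a * b).x = a.x + b.x := rfl
@[simp] lemma mul_y (a b : Heis) : (a * b).y = a.y + b.y := rfl
@[simp] lemma mul_z (a b : Heis) :
    (a * b).z = a.z + b.z + (a.x * b.y - b.x * a.y) / 2 := rfl
@[simp] lemma one_x : (1 : Heis).x = 0 := rfl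
@[simp] lemma one_y : (1 : Heis).y = 0 := rfl
@[simp] lemma one_z : (1 : Heis).z = 0 := rfl
@[simp] lemma inv_x (a : Heis) : a⁻¹.x = -a.x := rfl
@[simp] lemma inv_y (a : Heis) : a⁻¹.y = -a.y := rfl
@[simp] lemma inv_z (a : Heis) : a⁻¹.z = -a.z := rfl

noncomputable instance : Group Heis where
  mul_assoc a b c := by ext <;> simp <;> ring
  one_mul a := by ext <;> simp
  mul_one a := by ext <;> simp
  inv_mul_cancel a := by ext <;> simp

end Heis

/-- The rotation action `α(t)` of `ℝ` on the Heisenberg group. -/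
noncomputable def alphaMap (t : ℝ) (v : Heis) : Heis :=
  ⟨v.x * cos t + v.y * sin t, -v.x * sin t + v.y * cos t, v.z⟩

@[simp] lemma alphaMap_x (t : ℝ) (v : Heis) :
    (alphaMap t v).x = v.x * cos t + v.y * sin t := rfl
@[simp] lemma alphaMap_y (t : ℝ) (v : Heis) :
    (alphaMap t v).y = -v.x * sin t + v.y * cos t := rfl
@[simp] lemma alphaMap_z (t : ℝ) (v : Heis) : (alphaMap t v).z = v.z := rfl

/-- The oscillator group `G = ℝ ⋉_α H₃(ℝ)`. -/
@[ext] structure Osc : Type where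
  t : ℝ
  v : Heis

namespace Osc

noncomputable instance : Mul Osc := ⟨fun a b => ⟨a.t + b.t, a.v * alphaMap a.t b.v⟩⟩
instance : One Osc := ⟨⟨0, 1⟩⟩
noncomputable instance : Inv Osc := ⟨fun a => ⟨-a.t, alphaMap (-a.t) a.v⁻¹⟩⟩

@[simp] lemma mul_t (a b : Osc) : (a * b).t = a.t + b.t := rfl
@[simp] lemma mul_v (a b : Osc) : (a * b).v = a.v * alphaMap a.t b.v := rfl
@[simp] lemma one_t : (1 : Osc).t = 0 := rfl
@[simp] lemma one_v : (1 : Osc).v = 1 := rfl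
@[simp] lemma inv_t (a : Osc) : a⁻¹.t = -a.t := rfl
@[simp] lemma inv_v (a : Osc) : a⁻¹.v = alphaMap (-a.t) a.v⁻¹ := rfl

lemma alphaMap_one (t : ℝ) : alphaMap t (1 : Heis) = 1 := by
  ext <;> simp

lemma alphaMap_mul (t : ℝ) (v w : Heis) :
    alphaMap t (v * w) = alphaMap t v * alphaMap t w := by
  ext
  · simp; ring
  · simp; ring
  · simp
    linear_combination (w.x * v.y - v.x * w.y) * (sin_sq_add_cos_sq t)

lemma alphaMap_add (s t : ℝ) (v : Heis) :
    alphaMap (s + t) v = alphaMap s (alphaMap t v) := by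
  ext <;> simp [cos_add, sin_add] <;> ring

lemma alphaMap_zero (v : Heis) : alphaMap 0 v = v := by
  ext <;> simp

noncomputable instance : Group Osc where
  mul_assoc a b c := by
    refine Osc.ext (by simp; ring) ?_
    simp only [Osc.mul_v, Osc.mul_t, alphaMap_mul, ← alphaMap_add]
    rw [mul_assoc]
  one_mul a := Osc.ext (by simp) (by simp [alphaMap_zero])
  mul_one a := Osc.ext (by simp) (by simp [alphaMap_one])
  inv_mul_cancel a := by
    refine Osc.ext (by simp) ?_
    simp only [Osc.mul_v, Osc.inv_v, Osc.inv_t, Osc.one_v]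
    rw [← alphaMap_mul, inv_mul_cancel, alphaMap_one]

end Osc

/-- `Heis` carries the standard topology of `ℝ³`. -/
noncomputable instance : TopologicalSpace Heis :=
  TopologicalSpace.induced (fun v => (v.x, v.y, v.z)) inferInstance

/-- `Osc` carries the standard topology of `ℝ⁴`. -/
noncomputable instance : TopologicalSpace Osc :=
  TopologicalSpace.induced (fun g => (g.t, g.v.x, g.v.y, g.v.z)) inferInstance

lemma cos_sin_int (n : ℤ) :
    ∃ a b : ℤ, cos (π / 2 * n) = a ∧ sin (π / 2 * n) = b := by
  induction n using Int.induction_on with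
  | zero => exact ⟨1, 0, by simp, by simp⟩
  | succ n ih =>
    obtain ⟨a, b, ha, hb⟩ := ih
    have h : (((n : ℤ) + 1 : ℤ) : ℝ) = ((n : ℤ) : ℝ) + 1 := by push_cast; ring
    refine ⟨-b, a, ?_, ?_⟩
    · rw [h, mul_add, mul_one, cos_add, ha, hb]
      push_cast
      simp
    · rw [h, mul_add, mul_one, sin_add, ha, hb]
      simp
  | pred n ih =>
    obtain ⟨a, b, ha, hb⟩ := ih
    have h : ((-(n : ℤ) - 1 : ℤ) : ℝ) = ((-(n : ℤ) : ℤ) : ℝ) - 1 := by push_cast; ring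
    refine ⟨b, -a, ?_, ?_⟩
    · rw [h, mul_sub, mul_one, cos_sub, ha, hb]
      simp
    · rw [h, mul_sub, mul_one, sin_sub, ha, hb]
      push_cast
      simp

lemma cos_sin_int' (t : ℝ) (h : ∃ j : ℤ, t = π / 2 * j) :
    ∃ a b : ℤ, cos t = a ∧ sin t = b := by
  obtain ⟨j, rfl⟩ := h
  exact cos_sin_int j

/-- The lattice `θℤ ⋉ Γ_k` in the oscillator group, for `θ` an integer multiple of `π/2`. -/
noncomputable def LamTheta (k : ℕ+) (θ : ℝ) (m : ℤ) (hθ : θ = π / 2 * m) : Subgroup Osc where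
  carrier := {g | (∃ n : ℤ, g.t = θ * n) ∧ (∃ a : ℤ, g.v.x = a) ∧ (∃ b : ℤ, g.v.y = b) ∧
    (∃ c : ℤ, g.v.z = (c : ℝ) / (2 * ((k : ℕ) : ℝ)))}
  one_mem' := ⟨⟨0, by simp⟩, ⟨0, by simp⟩, ⟨0, by simp⟩, ⟨0, by simp⟩⟩
  mul_mem' := by
    rintro g h ⟨⟨n₁, hn₁⟩, ⟨a₁, ha₁⟩, ⟨b₁, hb₁⟩, ⟨c₁, hc₁⟩⟩
      ⟨⟨n₂, hn₂⟩, ⟨a₂, ha₂⟩, ⟨b₂, hb₂⟩, ⟨c₂, hc₂⟩⟩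
    obtain ⟨A, B, hA, hB⟩ := cos_sin_int' g.t ⟨m * n₁, by rw [hn₁, hθ]; push_cast; ring⟩
    have hk : ((k : ℕ) : ℝ) ≠ 0 := by
      exact_mod_cast k.ne_zero
    refine ⟨⟨n₁ + n₂, ?_⟩, ⟨a₁ + (a₂ * A + b₂ * B), ?_⟩, ⟨b₁ + (-(a₂ * B) + b₂ * A), ?_⟩,
      ⟨c₁ + c₂ + (k : ℕ) * (a₁ * (-(a₂ * B) + b₂ * A) - (a₂ * A + b₂ * B) * b₁), ?_⟩⟩
    · simp only [Osc.mul_t, hn₁, hn₂]; push_cast; ring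
    · simp only [Osc.mul_v, Heis.mul_x, alphaMap_x, ha₁, ha₂, hb₂, hA, hB]; push_cast; ring
    · simp only [Osc.mul_v, Heis.mul_y, alphaMap_y, hb₁, ha₂, hb₂, hA, hB]; push_cast; ring
    · simp only [Osc.mul_v, Heis.mul_z, alphaMap_x, alphaMap_y, alphaMap_z,
        ha₁, hb₁, ha₂, hb₂, hc₁, hc₂, hA, hB]
      field_simp
      push_cast
      ring
  inv_mem' := by
    rintro g ⟨⟨n₁, hn₁⟩, ⟨a₁, ha₁⟩, ⟨b₁, hb₁⟩, ⟨c₁, hc₁⟩⟩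
    obtain ⟨A, B, hA, hB⟩ := cos_sin_int' g.t ⟨m * n₁, by rw [hn₁, hθ]; push_cast; ring⟩
    refine ⟨⟨-n₁, ?_⟩, ⟨-(a₁ * A) + b₁ * B, ?_⟩, ⟨-(a₁ * B) - b₁ * A, ?_⟩, ⟨-c₁, ?_⟩⟩
    · simp only [Osc.inv_t, hn₁]; push_cast; ring
    · simp only [Osc.inv_v, alphaMap_x, Heis.inv_x, Heis.inv_y, cos_neg, sin_neg,
        ha₁, hb₁, hA, hB]
      push_cast; ring
    · simp only [Osc.inv_v, alphaMap_y, Heis.inv_x, Heis.inv_y, cos_neg, sin_neg,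
        ha₁, hb₁, hA, hB]
      push_cast; ring
    · simp only [Osc.inv_v, alphaMap_z, Heis.inv_z, hc₁]
      push_cast; ring

/-- The lattice `Λ_{k,0} = 2πℤ × Γ_k`. -/
noncomputable def Lam0 (k : ℕ+) : Subgroup Osc :=
  LamTheta k (2 * π) 4 (by push_cast; ring)

/-- The lattice `Λ_{k,π} = πℤ × Γ_k`. -/
noncomputable def LamPi (k : ℕ+) : Subgroup Osc :=
  LamTheta k π 2 (by push_cast; ring)

/-- The lattice `Λ_{k,π/2} = (π/2)ℤ × Γ_k`. -/
noncomputable def LamPi2 (k : ℕ+) : Subgroup Osc :=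
  LamTheta k (π / 2) 1 (by push_cast; ring)

/-- The lattice `Γ_k = ℤ × ℤ × (1/(2k))ℤ` in the Heisenberg group. -/
noncomputable def Gamma (k : ℕ+) : Subgroup Heis where
  carrier := {v | (∃ a : ℤ, v.x = a) ∧ (∃ b : ℤ, v.y = b) ∧
    (∃ c : ℤ, v.z = (c : ℝ) / (2 * ((k : ℕ) : ℝ)))}
  one_mem' := ⟨⟨0, by simp⟩, ⟨0, by simp⟩, ⟨0, by simp⟩⟩
  mul_mem' := by
    rintro v w ⟨⟨a₁, ha₁⟩, ⟨b₁, hb₁⟩, ⟨c₁, hc₁⟩⟩ ⟨⟨a₂, ha₂⟩, ⟨b₂, hb₂⟩, ⟨c₂, hc₂⟩⟩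
    have hk : ((k : ℕ) : ℝ) ≠ 0 := by exact_mod_cast k.ne_zero
    refine ⟨⟨a₁ + a₂, ?_⟩, ⟨b₁ + b₂, ?_⟩, ⟨c₁ + c₂ + (k : ℕ) * (a₁ * b₂ - a₂ * b₁), ?_⟩⟩
    · simp [ha₁, ha₂]
    · simp [hb₁, hb₂]
    · simp only [Heis.mul_z, ha₁, hb₁, ha₂, hb₂, hc₁, hc₂]
      field_simp
      push_cast
      ring
  inv_mem' := by
    rintro v ⟨⟨a₁, ha₁⟩, ⟨b₁, hb₁⟩, ⟨c₁, hc₁⟩⟩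
    refine ⟨⟨-a₁, by simp [ha₁]⟩, ⟨-b₁, by simp [hb₁]⟩, ⟨-c₁, ?_⟩⟩
    simp only [Heis.inv_z, hc₁]
    push_cast
    ring

/-- The subset `pℤ × qℤ × rℤ × sℤ` of the oscillator group. -/
def prodSet (p q r s : ℝ) : Set Osc :=
  {g | (∃ n : ℤ, g.t = p * n) ∧ (∃ n : ℤ, g.v.x = q * n) ∧
    (∃ n : ℤ, g.v.y = r * n) ∧ (∃ n : ℤ, g.v.z = s * n)}


open scoped commutatorElement

section Pf

open Osc

lemma comm_v (g h : Osc) :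
    ⁅g, h⁆ = ⟨0, g.v * alphaMap g.t h.v * alphaMap h.t g.v⁻¹ * h.v⁻¹⟩ := by
  show g * h * g⁻¹ * h⁻¹ = _
  refine Osc.ext (by simp) ?_
  simp only [Osc.mul_v, Osc.mul_t, Osc.inv_v, Osc.inv_t]
  rw [← alphaMap_add, ← alphaMap_add,
    show g.t + h.t + -g.t = h.t by ring, show h.t + -h.t = 0 by ring, alphaMap_zero]

lemma axis_central (s z : ℝ) (hc : Real.cos s = 1) (hs : Real.sin s = 0) (c : Osc) :
    (⟨s, ⟨0, 0, z⟩⟩ : Osc) * c = c * ⟨s, ⟨0, 0, z⟩⟩ := by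
  refine Osc.ext (by simp [add_comm]) ?_
  refine Heis.ext ?_ ?_ ?_ <;> simp [hc, hs] <;> ring

lemma axis_pow (s z : ℝ) (n : ℕ) :
    (⟨s, ⟨0, 0, z⟩⟩ : Osc) ^ n = ⟨n * s, ⟨0, 0, n * z⟩⟩ := by
  induction n with
  | zero => refine Osc.ext (by simp) ?_ ; refine Heis.ext ?_ ?_ ?_ <;> simp
  | succ n ih =>
      rw [pow_succ, ih]
      refine Osc.ext (by simp; ring) ?_
      refine Heis.ext ?_ ?_ ?_ <;> simp <;> ring

lemma triv_comm (u w : Osc) (hcu : Real.cos u.t = 1) (hsu : Real.sin u.t = 0)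
    (hcw : Real.cos w.t = 1) (hsw : Real.sin w.t = 0) (c : Osc) : ⁅⁅u, w⁆, c⁆ = 1 := by
  have h0 : ⁅u, w⁆ = ⟨0, ⟨0, 0, (⁅u, w⁆).v.z⟩⟩ := by
    rw [comm_v]
    refine Osc.ext rfl ?_
    refine Heis.ext ?_ ?_ rfl <;> simp [hcu, hsu, hcw, hsw] <;> ring
  rw [commutatorElement_eq_one_iff_commute, h0]
  exact axis_central 0 _ (by simp) (by simp) c

end Pf
section Pf2

open Osc

lemma zmod_key (C1 S1 C2 S2 a b c d : ZMod 2)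
    (h1 : C1 * C1 + S1 * S1 = 1) (h2 : C2 * C2 + S2 * S2 = 1)
    (hx : a - c + S1 * d + C1 * c - S2 * b - C2 * a = 0)
    (hy : b - d - S1 * c + C1 * d + S2 * a - C2 * b = 0) :
    b * c - a * d + S2 * (b * d + b * b + a * c + a * a) - C2 * b * c + C2 * a * d
      - S1 * (d * d + c * c + b * d + a * c) - S1 * S2 * b * c + S1 * S2 * a * d
      - S1 * C2 * (b * d + a * c) - C1 * b * c + C1 * a * d + C1 * S2 * (b * d + a * c)
      - C1 * C2 * b * c + C1 * C2 * a * d = 0 := by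
  revert h1 h2 hx hy
  revert C1 S1 C2 S2 a b c d
  decide

lemma key (g h : Osc) (C1 S1 C2 S2 a b c d : ℤ)
    (hC1 : Real.cos g.t = C1) (hS1 : Real.sin g.t = S1)
    (hC2 : Real.cos h.t = C2) (hS2 : Real.sin h.t = S2)
    (ha : g.v.x = a) (hb : g.v.y = b) (hc : h.v.x = c) (hd : h.v.y = d)
    (hx : (⁅g, h⁆).v.x = 0) (hy : (⁅g, h⁆).v.y = 0) :
    ∃ n : ℤ, (⁅g, h⁆).v.z = n := by
  have hI1 : C1 * C1 + S1 * S1 = 1 := by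
    have h' : (C1 : ℝ) * C1 + S1 * S1 = 1 := by
      linear_combination Real.cos_sq_add_sin_sq g.t - (Real.cos g.t + (C1 : ℝ)) * hC1
        - (Real.sin g.t + (S1 : ℝ)) * hS1
    exact_mod_cast h'
  have hI2 : C2 * C2 + S2 * S2 = 1 := by
    have h' : (C2 : ℝ) * C2 + S2 * S2 = 1 := by
      linear_combination Real.cos_sq_add_sin_sq h.t - (Real.cos h.t + (C2 : ℝ)) * hC2
        - (Real.sin h.t + (S2 : ℝ)) * hS2
    exact_mod_cast h'
  rw [comm_v] at hx hy ⊢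
  simp only [Heis.mul_x, Heis.mul_y, Heis.mul_z, alphaMap_x, alphaMap_y, alphaMap_z,
    Heis.inv_x, Heis.inv_y, Heis.inv_z, hC1, hS1, hC2, hS2, ha, hb, hc, hd] at hx hy ⊢
  have hXi : a - c + S1 * d + C1 * c - S2 * b - C2 * a = 0 := by
    exact_mod_cast (by push_cast; linear_combination hx :
      ((a - c + S1 * d + C1 * c - S2 * b - C2 * a : ℤ) : ℝ) = ((0 : ℤ) : ℝ))
  have hYi : b - d - S1 * c + C1 * d + S2 * a - C2 * b = 0 := by
    exact_mod_cast (by push_cast; linear_combination hy :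
      ((b - d - S1 * c + C1 * d + S2 * a - C2 * b : ℤ) : ℝ) = ((0 : ℤ) : ℝ))
  set Z2 : ℤ := b * c - a * d + S2 * (b * d + b * b + a * c + a * a) - C2 * b * c + C2 * a * d
      - S1 * (d * d + c * c + b * d + a * c) - S1 * S2 * b * c + S1 * S2 * a * d
      - S1 * C2 * (b * d + a * c) - C1 * b * c + C1 * a * d + C1 * S2 * (b * d + a * c)
      - C1 * C2 * b * c + C1 * C2 * a * d with hZ2
  have hdvd : (2 : ℤ) ∣ Z2 := by
    have h0 : ((Z2 : ZMod 2)) = 0 := by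
      rw [hZ2]
      have e1 := congrArg (fun z : ℤ => (z : ZMod 2)) hXi
      have e2 := congrArg (fun z : ℤ => (z : ZMod 2)) hYi
      have e3 := congrArg (fun z : ℤ => (z : ZMod 2)) hI1
      have e4 := congrArg (fun z : ℤ => (z : ZMod 2)) hI2
      push_cast at e1 e2 e3 e4 ⊢
      linear_combination zmod_key (C1 : ZMod 2) S1 C2 S2 a b c d
        (by linear_combination e3) (by linear_combination e4)
        (by linear_combination e1) (by linear_combination e2)
    exact (ZMod.intCast_zmod_eq_zero_iff_dvd Z2 2).mp h0
  obtain ⟨n, hn⟩ := hdvd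
  refine ⟨n, ?_⟩
  have hr : ((Z2 : ℤ) : ℝ) = 2 * (n : ℝ) := by exact_mod_cast congrArg (fun z : ℤ => (z : ℝ)) hn
  rw [hZ2] at hr
  push_cast at hr
  linear_combination hr / 2

end Pf2
section Pf3

open Osc

/-- The element `X = (0,(1,0,0))`. -/
noncomputable def Xe : Osc := ⟨0, ⟨1, 0, 0⟩⟩
/-- The element `Y = (0,(0,1,0))`. -/
noncomputable def Ye : Osc := ⟨0, ⟨0, 1, 0⟩⟩

lemma memX (k : ℕ+) (θ : ℝ) (m : ℤ) (hθ : θ = π / 2 * m) : Xe ∈ LamTheta k θ m hθ :=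
  ⟨⟨0, by simp [Xe]⟩, ⟨1, by simp [Xe]⟩, ⟨0, by simp [Xe]⟩, ⟨0, by simp [Xe]⟩⟩

lemma memY (k : ℕ+) (θ : ℝ) (m : ℤ) (hθ : θ = π / 2 * m) : Ye ∈ LamTheta k θ m hθ :=
  ⟨⟨0, by simp [Ye]⟩, ⟨0, by simp [Ye]⟩, ⟨1, by simp [Ye]⟩, ⟨0, by simp [Ye]⟩⟩

lemma memAxis (k : ℕ+) (θ : ℝ) (m : ℤ) (hθ : θ = π / 2 * m) (c : ℤ) :
    (⟨0, ⟨0, 0, (c : ℝ) / (2 * ((k : ℕ) : ℝ))⟩⟩ : Osc) ∈ LamTheta k θ m hθ :=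
  ⟨⟨0, by simp⟩, ⟨0, by simp⟩, ⟨0, by simp⟩, ⟨c, by simp⟩⟩

lemma memD (k : ℕ+) (θ : ℝ) (m : ℤ) (hθ : θ = π / 2 * m) (d : ℤ) :
    (⟨0, ⟨(d : ℝ), 0, 0⟩⟩ : Osc) ∈ LamTheta k θ m hθ :=
  ⟨⟨0, by simp⟩, ⟨d, by simp⟩, ⟨0, by simp⟩, ⟨0, by simp⟩⟩

lemma central_char (u : Osc) (hX : u * Xe = Xe * u) (hY : u * Ye = Ye * u) :
    Real.cos u.t = 1 ∧ Real.sin u.t = 0 ∧ u.v.x = 0 ∧ u.v.y = 0 := by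
  have ex := congrArg (fun g : Osc => g.v.x) hX
  have ey := congrArg (fun g : Osc => g.v.y) hX
  simp [Xe] at ex ey
  have hc : Real.cos u.t = 1 := by linarith
  have hs : Real.sin u.t = 0 := by linarith
  have ez := congrArg (fun g : Osc => g.v.z) hX
  simp [Xe, hc, hs] at ez
  have hy0 : u.v.y = 0 := by linarith
  have ez2 := congrArg (fun g : Osc => g.v.z) hY
  simp [Ye, hc, hs] at ez2
  exact ⟨hc, hs, by linarith, hy0⟩

/-- Invariant 1: every commutator is central (2-step nilpotency). -/
def P1 (G : Type*) [Group G] : Prop := ∀ g h c : G, ⁅⁅g, h⁆, c⁆ = 1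

/-- Invariant 2: every commutator of squares is central. -/
def P2 (G : Type*) [Group G] : Prop := ∀ g h c : G, ⁅⁅g ^ 2, h ^ 2⁆, c⁆ = 1

/-- Invariant 3: there is a central element `u`, not a proper power of a central element,
with `u ^ N` a nontrivial commutator. -/
def P3 (G : Type*) [Group G] (N : ℕ) : Prop :=
  ∃ u g h : G, (∀ v, u * v = v * u) ∧ ⁅g, h⁆ = u ^ N ∧ u ^ N ≠ 1 ∧
    ∀ w : G, (∀ v, w * v = v * w) → ∀ m : ℕ, 2 ≤ m → w ^ m ≠ u

lemma P1_transfer {G H : Type*} [Group G] [Group H] (e : G ≃* H) (h : P1 G) : P1 H := by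
  intro a b c
  apply e.symm.injective
  rw [map_commutatorElement, map_commutatorElement, map_one]
  exact h _ _ _

lemma P2_transfer {G H : Type*} [Group G] [Group H] (e : G ≃* H) (h : P2 G) : P2 H := by
  intro a b c
  apply e.symm.injective
  rw [map_commutatorElement, map_commutatorElement, map_pow, map_pow, map_one]
  exact h _ _ _

lemma P3_transfer {G H : Type*} [Group G] [Group H] (e : G ≃* H) (N : ℕ) (h : P3 G N) :
    P3 H N := by
  obtain ⟨u, g, hh, hc, hcomm, hne, hprim⟩ := h
  refine ⟨e u, e g, e hh, ?_, ?_, ?_, ?_⟩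
  · intro v
    have h1 := hc (e.symm v)
    have := congrArg e h1
    simpa [map_mul] using this
  · rw [← map_commutatorElement, hcomm, map_pow]
  · rw [← map_pow]
    intro h1
    exact hne (e.injective (h1.trans (map_one e).symm))
  · intro w hw mm hm hwm
    apply hprim (e.symm w) ?_ mm hm
    · apply e.injective
      rw [map_pow, MulEquiv.apply_symm_apply]
      exact hwm
    · intro v
      apply e.injective
      have := hw (e v)
      simpa [map_mul] using this

lemma coe_comm {H : Subgroup Osc} (x y : ↥H) : ((⁅x, y⁆ : ↥H) : Osc) = ⁅(x : Osc), (y : Osc)⁆ :=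
  rfl

end Pf3
section Pf4

open Osc

lemma mem_dest {k : ℕ+} {θ : ℝ} {m : ℤ} {hθ : θ = π / 2 * m} {g : Osc}
    (hg : g ∈ LamTheta k θ m hθ) :
    (∃ n : ℤ, g.t = θ * n) ∧ (∃ a : ℤ, g.v.x = a) ∧ (∃ b : ℤ, g.v.y = b) ∧
      (∃ c : ℤ, g.v.z = (c : ℝ) / (2 * ((k : ℕ) : ℝ))) := hg

lemma cos2pi (n : ℤ) : Real.cos (2 * π * n) = 1 := by
  rw [mul_comm]; exact Real.cos_int_mul_two_pi n

lemma sin2pi (n : ℤ) : Real.sin (2 * π * n) = 0 := by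
  rw [show 2 * π * (n : ℝ) = ((2 * n : ℤ) : ℝ) * π by push_cast; ring]
  exact Real.sin_int_mul_pi _

lemma P1_lam0 (k : ℕ+) : P1 ↥(Lam0 k) := by
  intro g h c
  obtain ⟨⟨n, hn⟩, -, -, -⟩ := mem_dest g.2
  obtain ⟨⟨n', hn'⟩, -, -, -⟩ := mem_dest h.2
  apply Subtype.ext
  rw [coe_comm, coe_comm, OneMemClass.coe_one]
  exact triv_comm _ _ (by rw [hn]; exact cos2pi n) (by rw [hn]; exact sin2pi n)
    (by rw [hn']; exact cos2pi n') (by rw [hn']; exact sin2pi n') _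

lemma P2_pi (k : ℕ+) : P2 ↥(LamPi k) := by
  intro g h c
  obtain ⟨⟨n, hn⟩, -, -, -⟩ := mem_dest g.2
  obtain ⟨⟨n', hn'⟩, -, -, -⟩ := mem_dest h.2
  apply Subtype.ext
  rw [coe_comm, coe_comm, OneMemClass.coe_one]
  have ht : ((g ^ 2 : ↥(LamPi k)) : Osc).t = 2 * π * n := by
    rw [SubmonoidClass.coe_pow, pow_two, Osc.mul_t, hn]; ring
  have ht' : ((h ^ 2 : ↥(LamPi k)) : Osc).t = 2 * π * n' := by
    rw [SubmonoidClass.coe_pow, pow_two, Osc.mul_t, hn']; ring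
  rw [SubmonoidClass.coe_pow] at ht
  rw [SubmonoidClass.coe_pow] at ht'
  rw [SubmonoidClass.coe_pow, SubmonoidClass.coe_pow]
  exact triv_comm _ _ (by rw [ht]; exact cos2pi n) (by rw [ht]; exact sin2pi n)
    (by rw [ht']; exact cos2pi n') (by rw [ht']; exact sin2pi n') _

lemma notP1_pi (k : ℕ+) : ¬ P1 ↥(LamPi k) := by
  intro hP
  have memg : (⟨π, ⟨0, 0, 0⟩⟩ : Osc) ∈ LamPi k :=
    ⟨⟨1, by norm_num⟩, ⟨0, by norm_num⟩, ⟨0, by norm_num⟩, ⟨0, by norm_num⟩⟩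
  set g : ↥(LamPi k) := ⟨⟨π, ⟨0, 0, 0⟩⟩, memg⟩
  set x : ↥(LamPi k) := ⟨Xe, memX k π 2 (by push_cast; ring)⟩
  have h1 := hP g x g
  have h2 := congrArg (fun w : ↥(LamPi k) => ((w : Osc)).v.x) h1
  simp only [coe_comm, OneMemClass.coe_one] at h2
  rw [comm_v, comm_v] at h2
  simp [g, x, Xe, Real.cos_pi, Real.sin_pi] at h2

lemma notP1_pi2 (k : ℕ+) : ¬ P1 ↥(LamPi2 k) := by
  intro hP
  have memg : (⟨π / 2, ⟨0, 0, 0⟩⟩ : Osc) ∈ LamPi2 k :=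
    ⟨⟨1, by norm_num⟩, ⟨0, by norm_num⟩, ⟨0, by norm_num⟩, ⟨0, by norm_num⟩⟩
  set g : ↥(LamPi2 k) := ⟨⟨π / 2, ⟨0, 0, 0⟩⟩, memg⟩
  set x : ↥(LamPi2 k) := ⟨Xe, memX k (π / 2) 1 (by push_cast; ring)⟩
  have h1 := hP g x g
  have h2 := congrArg (fun w : ↥(LamPi2 k) => ((w : Osc)).v.y) h1
  simp only [coe_comm, OneMemClass.coe_one] at h2
  rw [comm_v, comm_v] at h2
  simp [g, x, Xe, Real.cos_pi_div_two, Real.sin_pi_div_two] at h2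

lemma notP2_pi2 (k : ℕ+) : ¬ P2 ↥(LamPi2 k) := by
  intro hP
  have memg : (⟨π / 2, ⟨0, 0, 0⟩⟩ : Osc) ∈ LamPi2 k :=
    ⟨⟨1, by norm_num⟩, ⟨0, by norm_num⟩, ⟨0, by norm_num⟩, ⟨0, by norm_num⟩⟩
  set g : ↥(LamPi2 k) := ⟨⟨π / 2, ⟨0, 0, 0⟩⟩, memg⟩
  set x : ↥(LamPi2 k) := ⟨Xe, memX k (π / 2) 1 (by push_cast; ring)⟩
  have h1 := hP g x g
  have h2 := congrArg (fun w : ↥(LamPi2 k) => ((w : Osc)).v.x) h1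
  simp only [coe_comm, OneMemClass.coe_one, SubmonoidClass.coe_pow] at h2
  rw [comm_v, comm_v] at h2
  simp [g, x, Xe, pow_two, Real.cos_pi_div_two, Real.sin_pi_div_two, Real.cos_add, Real.sin_add,
    Real.cos_pi, Real.sin_pi] at h2

end Pf4
section Pf5

open Osc

lemma comm_t (g h : Osc) : (⁅g, h⁆).t = 0 := by rw [comm_v]

lemma P3_holds (k : ℕ+) (θ : ℝ) (m : ℤ) (hθ : θ = π / 2 * m) (d : ℕ) (hd : 0 < d) :
    P3 ↥(LamTheta k θ m hθ) (2 * k * d) := by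
  have hk : ((k : ℕ) : ℝ) ≠ 0 := by exact_mod_cast k.ne_zero
  refine ⟨⟨⟨0, ⟨0, 0, ((1 : ℤ) : ℝ) / (2 * ((k : ℕ) : ℝ))⟩⟩, memAxis k θ m hθ 1⟩,
    ⟨⟨0, ⟨((d : ℤ) : ℝ), 0, 0⟩⟩, memD k θ m hθ d⟩, ⟨Ye, memY k θ m hθ⟩, ?_, ?_, ?_, ?_⟩
  · intro v
    exact Subtype.ext (axis_central 0 _ (by simp) (by simp) (v : Osc))
  · apply Subtype.ext
    rw [coe_comm, SubmonoidClass.coe_pow, axis_pow, comm_v]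
    refine Osc.ext (by simp) ?_
    refine Heis.ext ?_ ?_ ?_ <;> simp [Ye] <;> field_simp <;> ring
  · intro he
    have h3 := congrArg (fun w : ↥(LamTheta k θ m hθ) => ((w : Osc)).v.z) he
    simp only [SubmonoidClass.coe_pow, OneMemClass.coe_one] at h3
    rw [axis_pow] at h3
    simp only [Osc.one_v, Heis.one_z, Int.cast_one] at h3
    have : ((2 * (k : ℕ) * d : ℕ) : ℝ) * (1 / (2 * ((k : ℕ) : ℝ))) = 0 := h3
    rw [mul_one_div, div_eq_zero_iff] at this
    rcases this with h4 | h4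
    · have : (2 * (k : ℕ) * d : ℕ) = 0 := by exact_mod_cast h4
      simp [k.ne_zero, hd.ne'] at this
    · exact hk (by linarith)
  · intro w hw mm hmm hwm
    obtain ⟨⟨nw, hnw⟩, -, -, ⟨cw, hcw⟩⟩ := mem_dest w.2
    have hXo : (w : Osc) * Xe = Xe * (w : Osc) :=
      congrArg Subtype.val (hw ⟨Xe, memX k θ m hθ⟩)
    have hYo : (w : Osc) * Ye = Ye * (w : Osc) :=
      congrArg Subtype.val (hw ⟨Ye, memY k θ m hθ⟩)
    obtain ⟨hc1, hs1, hx0, hy0⟩ := central_char _ hXo hYo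
    have hw1 : (w : Osc) = ⟨(w : Osc).t, ⟨0, 0, (w : Osc).v.z⟩⟩ := by
      refine Osc.ext rfl (Heis.ext ?_ ?_ rfl) <;> simp [hx0, hy0]
    have hp := congrArg Subtype.val hwm
    rw [SubmonoidClass.coe_pow, hw1, axis_pow] at hp
    have hz := congrArg (fun o : Osc => o.v.z) hp
    simp only at hz
    rw [hcw] at hz
    have hz2 : (mm : ℝ) * cw = 1 := by
      field_simp at hz
      push_cast at hz
      linarith [hz]
    have hz3 : (mm : ℤ) * cw = 1 := by exact_mod_cast hz2
    have : (mm : ℤ) ∣ 1 := ⟨cw, hz3.symm⟩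
    have := Int.le_of_dvd one_pos this
    omega

lemma P3_dvd (k : ℕ+) (θ : ℝ) (m : ℤ) (hθ : θ = π / 2 * m) (N : ℕ)
    (hP : P3 ↥(LamTheta k θ m hθ) N) : 2 * (k : ℕ) ∣ N := by
  have hk : ((k : ℕ) : ℝ) ≠ 0 := by exact_mod_cast k.ne_zero
  obtain ⟨u, g, h, hcen, hcomm, hne, hprim⟩ := hP
  rcases Nat.eq_zero_or_pos N with hN0 | hNpos
  · subst hN0; exact dvd_zero _
  have hXo : (u : Osc) * Xe = Xe * (u : Osc) :=
    congrArg Subtype.val (hcen ⟨Xe, memX k θ m hθ⟩)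
  have hYo : (u : Osc) * Ye = Ye * (u : Osc) :=
    congrArg Subtype.val (hcen ⟨Ye, memY k θ m hθ⟩)
  obtain ⟨hc1, hs1, hx0, hy0⟩ := central_char _ hXo hYo
  obtain ⟨-, -, -, ⟨cu, hcu⟩⟩ := mem_dest u.2
  have hu1 : (u : Osc) = ⟨(u : Osc).t, ⟨0, 0, (u : Osc).v.z⟩⟩ := by
    refine Osc.ext rfl (Heis.ext ?_ ?_ rfl) <;> simp [hx0, hy0]
  have hc2 : ⁅(g : Osc), (h : Osc)⁆ = ⟨(N : ℝ) * (u : Osc).t, ⟨0, 0, (N : ℝ) * (u : Osc).v.z⟩⟩ := by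
    rw [← coe_comm, hcomm, SubmonoidClass.coe_pow]
    conv_lhs => rw [hu1]
    rw [axis_pow]
  have hut : (u : Osc).t = 0 := by
    have ht := congrArg Osc.t hc2
    rw [comm_t] at ht
    have := ht.symm
    rcases mul_eq_zero.mp this with h4 | h4
    · exact absurd (by exact_mod_cast h4 : N = 0) hNpos.ne'
    · exact h4
  -- rule out cu = 0
  have hcu0 : cu ≠ 0 := by
    intro h0
    apply hne
    apply Subtype.ext
    rw [SubmonoidClass.coe_pow, OneMemClass.coe_one]
    conv_lhs => rw [hu1]
    rw [axis_pow, hut, hcu, h0]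
    refine Osc.ext (by simp) (Heis.ext (by simp) (by simp) (by simp))
  -- rule out |cu| ≥ 2
  have hcu1 : cu = 1 ∨ cu = -1 := by
    by_contra hcc
    push_neg at hcc
    set s : ℤ := if 0 ≤ cu then 1 else -1 with hs
    set mm : ℕ := cu.natAbs with hmm
    have hms : (mm : ℤ) * s = cu := by
      rw [hmm, hs]; split_ifs <;> omega
    have h2m : 2 ≤ mm := by
      rw [hmm]; omega
    apply hprim ⟨⟨0, ⟨0, 0, ((s : ℤ) : ℝ) / (2 * ((k : ℕ) : ℝ))⟩⟩, memAxis k θ m hθ s⟩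
      (fun v => Subtype.ext (axis_central 0 _ (by simp) (by simp) (v : Osc))) mm h2m
    apply Subtype.ext
    rw [SubmonoidClass.coe_pow, axis_pow]
    conv_rhs => rw [hu1]
    rw [hut, hcu]
    refine Osc.ext (by simp) (Heis.ext rfl rfl ?_)
    show (mm : ℝ) * ((s : ℝ) / (2 * ((k : ℕ) : ℝ))) = (cu : ℝ) / (2 * ((k : ℕ) : ℝ))
    rw [mul_div_assoc']
    congr 1
    exact_mod_cast congrArg (fun z : ℤ => (z : ℝ)) hms
  -- apply the key lemma
  obtain ⟨⟨ng, hng⟩, ⟨ag, hag⟩, ⟨bg, hbg⟩, -⟩ := mem_dest g.2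
  obtain ⟨⟨nh, hnh⟩, ⟨ah, hah⟩, ⟨bh, hbh⟩, -⟩ := mem_dest h.2
  obtain ⟨Cg, Sg, hCg, hSg⟩ := cos_sin_int' (g : Osc).t ⟨m * ng, by rw [hng, hθ]; push_cast; ring⟩
  obtain ⟨Ch, Sh, hCh, hSh⟩ := cos_sin_int' (h : Osc).t ⟨m * nh, by rw [hnh, hθ]; push_cast; ring⟩
  have hx : (⁅(g : Osc), (h : Osc)⁆).v.x = 0 := by rw [hc2]
  have hy : (⁅(g : Osc), (h : Osc)⁆).v.y = 0 := by rw [hc2]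
  obtain ⟨nz, hnz⟩ := key (g : Osc) (h : Osc) Cg Sg Ch Sh ag bg ah bh
    hCg hSg hCh hSh hag hbg hah hbh hx hy
  have hzz := congrArg (fun o : Osc => o.v.z) hc2
  simp only at hzz
  rw [hnz, hcu] at hzz
  -- hzz : (nz : ℝ) = N * (cu / (2k))
  have hdz : ((2 * (k : ℕ) * nz : ℤ) : ℝ) = ((N : ℤ) * cu : ℝ) := by
    push_cast
    field_simp at hzz
    linarith [hzz]
  have hdz2 : 2 * ((k : ℕ) : ℤ) * nz = (N : ℤ) * cu := by exact_mod_cast hdz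
  have : (2 * ((k : ℕ) : ℤ)) ∣ (N : ℤ) := by
    rcases hcu1 with h1 | h1
    · rw [h1, mul_one] at hdz2
      exact ⟨nz, hdz2.symm⟩
    · rw [h1] at hdz2
      exact ⟨-nz, by linarith⟩
  exact_mod_cast this

end Pf5
section Pf6

open Osc

lemma no_iso_P3 (k p : ℕ+) (hkp : k ≠ p) (θ1 θ2 : ℝ) (m1 m2 : ℤ)
    (h1 : θ1 = π / 2 * m1) (h2 : θ2 = π / 2 * m2)
    (e : ↥(LamTheta k θ1 m1 h1) ≃* ↥(LamTheta p θ2 m2 h2)) : False := by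
  by_cases hdvd : (p : ℕ) ∣ (k : ℕ)
  · have hp3 : P3 ↥(LamTheta p θ2 m2 h2) (2 * p * 1) := P3_holds p θ2 m2 h2 1 one_pos
    have hdd := P3_dvd k θ1 m1 h1 _ (P3_transfer e.symm _ hp3)
    have hkdp : (k : ℕ) ∣ (p : ℕ) := by
      have := (Nat.mul_dvd_mul_iff_left (by norm_num : (0:ℕ) < 2)).mp (by simpa using hdd)
      exact this
    exact hkp (PNat.coe_injective (Nat.dvd_antisymm hkdp hdvd))
  · have hp3 : P3 ↥(LamTheta k θ1 m1 h1) (2 * k * 1) := P3_holds k θ1 m1 h1 1 one_pos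
    have hdd := P3_dvd p θ2 m2 h2 _ (P3_transfer e _ hp3)
    exact hdvd ((Nat.mul_dvd_mul_iff_left (by norm_num : (0:ℕ) < 2)).mp (by simpa using hdd))

end Pf6

/-- The groups `Λ_{k,i}`, for `k` a positive integer and `i ∈ {0, π, π/2}`
(indexed here by `i : Fin 3`, with `0 ↦ Λ_{k,0}`, `1 ↦ Λ_{k,π}`, `2 ↦ Λ_{k,π/2}`), are pairwise
non-isomorphic. -/
theorem statement10 (k p : ℕ+) (i j : Fin 3) (h : (k, i) ≠ (p, j)) :
    IsEmpty ((![Lam0 k, LamPi k, LamPi2 k] i : Subgroup Osc) ≃*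
      (![Lam0 p, LamPi p, LamPi2 p] j : Subgroup Osc)) := by
  constructor
  intro e
  by_cases hkp : k = p
  · subst hkp
    have hij : i ≠ j := fun hh => h (by rw [hh])
    fin_cases i <;> fin_cases j
    · exact hij rfl
    · exact notP1_pi k (P1_transfer e (P1_lam0 k))
    · exact notP1_pi2 k (P1_transfer e (P1_lam0 k))
    · exact notP1_pi k (P1_transfer e.symm (P1_lam0 k))
    · exact hij rfl
    · exact notP2_pi2 k (P2_transfer e (P2_pi k))
    · exact notP1_pi2 k (P1_transfer e.symm (P1_lam0 k))
    · exact notP2_pi2 k (P2_transfer e.symm (P2_pi k))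
    · exact hij rfl
  · fin_cases i <;> fin_cases j
    · exact no_iso_P3 k p hkp (2*π) (2*π) 4 4 (by push_cast; ring) (by push_cast; ring) e
    · exact no_iso_P3 k p hkp (2*π) π 4 2 (by push_cast; ring) (by push_cast; ring) e
    · exact no_iso_P3 k p hkp (2*π) (π/2) 4 1 (by push_cast; ring) (by push_cast; ring) e
    · exact no_iso_P3 k p hkp π (2*π) 2 4 (by push_cast; ring) (by push_cast; ring) e
    · exact no_iso_P3 k p hkp π π 2 2 (by push_cast; ring) (by push_cast; ring) e
    · exact no_iso_P3 k p hkp π (π/2) 2 1 (by push_cast; ring) (by push_cast; ring) e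
    · exact no_iso_P3 k p hkp (π/2) (2*π) 1 4 (by push_cast; ring) (by push_cast; ring) e
    · exact no_iso_P3 k p hkp (π/2) π 1 2 (by push_cast; ring) (by push_cast; ring) e
    · exact no_iso_P3 k p hkp (π/2) (π/2) 1 1 (by push_cast; ring) (by push_cast; ring) e
end

section
/- Let l and k be positive integers and let q, r be positive real numbers. Then L = 2πlℤ × qℤ × rℤ × (qr/(2k))ℤ is a subgroup of the oscillator group G, and the map γ₁ : Λ_{k,0} → L defined by γ₁(t,x,y,z) = (l·t, q·x, r·y, qr·z) is a group isomorphism. -/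
open Real

lemma cos_two_pi_int (n : ℤ) : cos (2 * π * n) = 1 := by
  have := Real.cos_int_mul_two_pi n
  rw [show ((n : ℝ) * (2 * π)) = 2 * π * n by ring] at this
  exact this

lemma sin_two_pi_int (n : ℤ) : sin (2 * π * n) = 0 := by
  have := Real.sin_int_mul_pi (2 * n)
  rw [show (((2 * n : ℤ) : ℝ) * π) = 2 * π * n by push_cast; ring] at this
  exact this

lemma alphaMap_two_pi_int (n : ℤ) (w : Heis) : alphaMap (2 * π * n) w = w := by
  ext <;> simp [cos_two_pi_int, sin_two_pi_int]

lemma mem_Lam0 (k : ℕ+) (g : Osc) :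
    g ∈ Lam0 k ↔ (∃ n : ℤ, g.t = 2 * π * n) ∧ (∃ a : ℤ, g.v.x = a) ∧ (∃ b : ℤ, g.v.y = b) ∧
      (∃ c : ℤ, g.v.z = (c : ℝ) / (2 * ((k : ℕ) : ℝ))) := Iff.rfl

/-- The subgroup `2πlℤ × qℤ × rℤ × (qr/(2k))ℤ` of the oscillator group. -/
noncomputable def Lsub (l k : ℕ+) (q r : ℝ) : Subgroup Osc where
  carrier := prodSet (2 * π * ((l : ℕ) : ℝ)) q r (q * r / (2 * ((k : ℕ) : ℝ)))
  one_mem' := ⟨⟨0, by simp⟩, ⟨0, by simp⟩, ⟨0, by simp⟩, ⟨0, by simp⟩⟩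
  mul_mem' := by
    rintro g h ⟨⟨n₁, hn₁⟩, ⟨a₁, ha₁⟩, ⟨b₁, hb₁⟩, ⟨c₁, hc₁⟩⟩
      ⟨⟨n₂, hn₂⟩, ⟨a₂, ha₂⟩, ⟨b₂, hb₂⟩, ⟨c₂, hc₂⟩⟩
    have halpha : alphaMap g.t h.v = h.v := by
      rw [hn₁, show (2 * π * ((l : ℕ) : ℝ) * n₁) = 2 * π * ((l : ℤ) * n₁ : ℤ)
        by push_cast; ring, alphaMap_two_pi_int]
    have hk : ((k : ℕ) : ℝ) ≠ 0 := by exact_mod_cast k.ne_zero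
    refine ⟨⟨n₁ + n₂, ?_⟩, ⟨a₁ + a₂, ?_⟩, ⟨b₁ + b₂, ?_⟩,
      ⟨c₁ + c₂ + (k : ℕ) * (a₁ * b₂ - a₂ * b₁), ?_⟩⟩
    · simp only [Osc.mul_t, hn₁, hn₂]; push_cast; ring
    · simp only [Osc.mul_v, halpha, Heis.mul_x, ha₁, ha₂]; push_cast; ring
    · simp only [Osc.mul_v, halpha, Heis.mul_y, hb₁, hb₂]; push_cast; ring
    · simp only [Osc.mul_v, halpha, Heis.mul_z, ha₁, ha₂, hb₁, hb₂, hc₁, hc₂]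
      field_simp
      push_cast
      ring
  inv_mem' := by
    rintro g ⟨⟨n₁, hn₁⟩, ⟨a₁, ha₁⟩, ⟨b₁, hb₁⟩, ⟨c₁, hc₁⟩⟩
    have halpha : ∀ w : Heis, alphaMap (-g.t) w = w := by
      intro w
      rw [hn₁, show (-(2 * π * ((l : ℕ) : ℝ) * n₁)) = 2 * π * ((-(l : ℤ) * n₁ : ℤ))
        by push_cast; ring, alphaMap_two_pi_int]
    refine ⟨⟨-n₁, ?_⟩, ⟨-a₁, ?_⟩, ⟨-b₁, ?_⟩, ⟨-c₁, ?_⟩⟩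
    · simp only [Osc.inv_t, hn₁]; push_cast; ring
    · simp only [Osc.inv_v, halpha, Heis.inv_x, ha₁]; push_cast; ring
    · simp only [Osc.inv_v, halpha, Heis.inv_y, hb₁]; push_cast; ring
    · simp only [Osc.inv_v, halpha, Heis.inv_z, hc₁]; push_cast; ring

/-- For positive integers `l, k` and positive reals `q, r`, the set
`L = 2πlℤ × qℤ × rℤ × (qr/(2k))ℤ` is a subgroup of the oscillator group, and
`γ₁(t,x,y,z) = (lt, qx, ry, qrz)` is a group isomorphism `Λ_{k,0} → L`. -/
theorem statement13 (l k : ℕ+) (q r : ℝ) (hq : 0 < q) (hr : 0 < r) :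
    ∃ S : Subgroup Osc,
      (S : Set Osc) = prodSet (2 * π * ((l : ℕ) : ℝ)) q r (q * r / (2 * ((k : ℕ) : ℝ))) ∧
      ∃ φ : Lam0 k ≃* S, ∀ g : Lam0 k,
        (↑(φ g) : Osc) = ⟨((l : ℕ) : ℝ) * (g : Osc).t,
          ⟨q * (g : Osc).v.x, r * (g : Osc).v.y, q * r * (g : Osc).v.z⟩⟩ := by
  classical
  have hk0 : ((k : ℕ) : ℝ) ≠ 0 := by exact_mod_cast k.ne_zero
  have hl0 : ((l : ℕ) : ℝ) ≠ 0 := by exact_mod_cast l.ne_zero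
  refine ⟨Lsub l k q r, rfl, ?_⟩
  set f : Lam0 k → Osc := fun g =>
    ⟨((l : ℕ) : ℝ) * (g : Osc).t,
      ⟨q * (g : Osc).v.x, r * (g : Osc).v.y, q * r * (g : Osc).v.z⟩⟩ with hf
  have hmem : ∀ g : Lam0 k, f g ∈ Lsub l k q r := by
    intro g
    obtain ⟨⟨n, hn⟩, ⟨a, ha⟩, ⟨b, hb⟩, ⟨c, hc⟩⟩ := (mem_Lam0 k _).1 g.2
    refine ⟨⟨n, ?_⟩, ⟨a, ?_⟩, ⟨b, ?_⟩, ⟨c, ?_⟩⟩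
    · show ((l : ℕ) : ℝ) * (g : Osc).t = _; rw [hn]; ring
    · show q * (g : Osc).v.x = _; rw [ha]
    · show r * (g : Osc).v.y = _; rw [hb]
    · show q * r * (g : Osc).v.z = _; rw [hc]; field_simp
  let φ₀ : Lam0 k →* Lsub l k q r :=
    { toFun := fun g => ⟨f g, hmem g⟩
      map_one' := by
        apply Subtype.ext
        show f 1 = 1
        have h1 : ((1 : Lam0 k) : Osc) = 1 := rfl
        simp only [hf, h1]
        ext <;> simp
      map_mul' := by
        intro g h
        obtain ⟨⟨n, hn⟩, -, -, -⟩ := (mem_Lam0 k _).1 g.2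
        have h1 : alphaMap (g : Osc).t (h : Osc).v = (h : Osc).v := by
          rw [hn, alphaMap_two_pi_int]
        have h2 : ∀ w : Heis, alphaMap (((l : ℕ) : ℝ) * (g : Osc).t) w = w := by
          intro w
          rw [hn, show ((l : ℕ) : ℝ) * (2 * π * n) = 2 * π * (((l : ℤ) * n : ℤ) : ℝ)
            by push_cast; ring, alphaMap_two_pi_int]
        apply Subtype.ext
        show f (g * h) = f g * f h
        have hgh : ((g * h : Lam0 k) : Osc) = (g : Osc) * (h : Osc) := rfl
        simp only [hf, hgh]
        ext
        · simp; ring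
        · simp [h1, h2]; ring
        · simp [h1, h2]; ring
        · simp [h1, h2]; ring }
  have hbij : Function.Bijective φ₀ := by
    constructor
    · intro g h heq
      have heq' : f g = f h := congrArg Subtype.val heq
      apply Subtype.ext
      have ht := congrArg Osc.t heq'
      have hx := congrArg (fun o : Osc => o.v.x) heq'
      have hy := congrArg (fun o : Osc => o.v.y) heq'
      have hz := congrArg (fun o : Osc => o.v.z) heq'
      simp only [hf] at ht hx hy hz
      have hqr : q * r ≠ 0 := by positivity
      ext
      · exact mul_left_cancel₀ hl0 ht
      · exact mul_left_cancel₀ hq.ne' hx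
      · exact mul_left_cancel₀ hr.ne' hy
      · exact mul_left_cancel₀ hqr hz
    · rintro ⟨s, hs⟩
      obtain ⟨⟨n, hn⟩, ⟨a, ha⟩, ⟨b, hb⟩, ⟨c, hc⟩⟩ := hs
      refine ⟨⟨⟨2 * π * n, ⟨a, b, (c : ℝ) / (2 * ((k : ℕ) : ℝ))⟩⟩,
        ⟨⟨n, rfl⟩, ⟨a, rfl⟩, ⟨b, rfl⟩, ⟨c, rfl⟩⟩⟩, ?_⟩
      apply Subtype.ext
      show f _ = s
      simp only [hf]
      ext
      · rw [hn]; show ((l : ℕ) : ℝ) * (2 * π * n) = _; ring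
      · exact ha.symm
      · exact hb.symm
      · show q * r * ((c : ℝ) / (2 * ((k : ℕ) : ℝ))) = s.v.z
        rw [hc]; field_simp
  exact ⟨MulEquiv.ofBijective φ₀ hbij, fun g => rfl⟩
end
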